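/- Let $H_n$ be the height of a random recursive tree with $n$ nodes. Then $\mathbb{E}[H_n] \leq (e + o(1))\log n$ as $n \to \infty$. -/

import Mathlib

open MeasureTheory ProbabilityTheory Filter

/-- The depth of node `i` in the tree determined by the parent function `f`
(where the parent of node `i ≥ 1` is `f i < i`, and `0` is the root). -/
def treeDepth (f : ℕ → ℕ) (i : ℕ) : ℕ :=
  if h : f i < i then treeDepth f (f i) + 1 else 0
termination_by i
decreasing_by exact h

lemma treeDepth_le (f : ℕ → ℕ) (i : ℕ) : treeDepth f i ≤ i := by
  induction i using Nat.strong_induction_on with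
  | _ i ih =>
    rw [treeDepth]
    split
    · next h => exact Nat.succ_le_of_lt (lt_of_le_of_lt (ih _ h) h)
    · exact Nat.zero_le _

lemma treeDepth_congr {f g : ℕ → ℕ} (h : ∀ m ≤ i, f m = g m) :
    treeDepth f i = treeDepth g i := by
  induction i using Nat.strong_induction_on with
  | _ i ih =>
    conv_lhs => rw [treeDepth]
    conv_rhs => rw [treeDepth]
    rw [h i le_rfl]
    split
    · next hg =>
      rw [ih (g i) hg (fun m hm => h m (le_of_lt (lt_of_le_of_lt hm hg)))]
    · rfl

lemma treeDepth_sum (f : ℕ → ℕ) (i : ℕ) :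
    treeDepth f i = ∑ j ∈ Finset.range i, if f i = j then treeDepth f j + 1 else 0 := by
  rw [treeDepth, Finset.sum_ite_eq]
  simp [Finset.mem_range]

lemma measurable_treeDepth {Ω : Type*} [MeasurableSpace Ω] (par : Ω → ℕ → ℕ)
    (hmeas : ∀ i, Measurable fun ω => par ω i) (i : ℕ) :
    Measurable fun ω => treeDepth (par ω) i := by
  induction i using Nat.strong_induction_on with
  | _ i ih =>
    have he : (fun ω => treeDepth (par ω) i)
        = fun ω => ∑ j ∈ Finset.range i, if par ω i = j then treeDepth (par ω) j + 1 else 0 := by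
      funext ω; exact treeDepth_sum (par ω) i
    rw [he]
    refine Finset.measurable_sum _ fun j hj => ?_
    exact Measurable.ite ((hmeas i) (measurableSet_singleton j))
      ((ih j (Finset.mem_range.mp hj)).add measurable_const) measurable_const

section AuxRRT
variable {Ω : Type*} [MeasurableSpace Ω] (μ : Measure Ω) [IsProbabilityMeasure μ]
  (par : Ω → ℕ → ℕ)

lemma integrable_of_bdd {f : Ω → ℝ} (hf : Measurable f) (C : ℝ) (hC : ∀ ω, ‖f ω‖ ≤ C) :
    Integrable f μ :=
  (integrable_const C).mono' hf.aestronglyMeasurable (ae_of_all _ hC)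

lemma measurable_expD (hmeas : ∀ i, Measurable fun ω => par ω i) (t : ℝ) (j : ℕ) :
    Measurable fun ω => Real.exp (t * ((treeDepth (par ω) j : ℝ) + 1)) :=
  Real.measurable_exp.comp (measurable_const.mul
    (((measurable_of_countable (Nat.cast : ℕ → ℝ)).comp
      (measurable_treeDepth par hmeas j)).add measurable_const))

lemma mgf_rec
    (hmeas : ∀ i, Measurable fun ω => par ω i)
    (hlt : ∀ ω, ∀ i : ℕ, 0 < i → par ω i < i)
    (hunif : ∀ i : ℕ, 0 < i → ∀ j < i, μ {ω | par ω i = j} = (i : ENNReal)⁻¹)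
    (hindep : iIndepFun (fun i ω => par ω i) μ)
    (t : ℝ) (ht : 0 ≤ t) (i : ℕ) (hi : 0 < i) :
    ∫ ω, Real.exp (t * treeDepth (par ω) i) ∂μ
      = Real.exp t / i * ∑ j ∈ Finset.range i, ∫ ω, Real.exp (t * treeDepth (par ω) j) ∂μ := by
  classical
  have hST : Disjoint ({i} : Finset ℕ) (Finset.range i) := by simp
  have hIndep := hindep.indepFun_finset {i} (Finset.range i) hST hmeas
  have Ebdd : ∀ j, ∀ ω : Ω, ‖Real.exp (t * ((treeDepth (par ω) j : ℝ) + 1))‖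
      ≤ Real.exp (t * ((j:ℝ) + 1)) := by
    intro j ω
    rw [Real.norm_eq_abs, abs_of_pos (Real.exp_pos _)]
    apply Real.exp_le_exp.mpr
    apply mul_le_mul_of_nonneg_left _ ht
    have := treeDepth_le (par ω) j
    exact add_le_add_left (Nat.cast_le.mpr this) 1
  set F : ℕ → Ω → ℝ := fun j ω =>
    (if par ω i = j then (1:ℝ) else 0) * Real.exp (t * ((treeDepth (par ω) j : ℝ) + 1)) with hF
  have Fmeas : ∀ j, Measurable (F j) := fun j =>
    (Measurable.ite ((hmeas i) (measurableSet_singleton j)) measurable_const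
      measurable_const).mul (measurable_expD par hmeas t j)
  have Fbdd : ∀ j, ∀ ω, ‖F j ω‖ ≤ Real.exp (t * ((j : ℝ) + 1)) := by
    intro j ω
    rw [hF, norm_mul]
    calc ‖if par ω i = j then (1:ℝ) else 0‖ * ‖Real.exp (t * ((treeDepth (par ω) j : ℝ) + 1))‖
        ≤ 1 * Real.exp (t * ((j:ℝ) + 1)) := by
          apply mul_le_mul _ (Ebdd j ω) (norm_nonneg _) zero_le_one
          split <;> simp
      _ = _ := one_mul _
  have Fint : ∀ j, Integrable (F j) μ := fun j =>
    integrable_of_bdd μ (Fmeas j) _ (Fbdd j)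
  have key : (fun ω => Real.exp (t * treeDepth (par ω) i))
      = fun ω => ∑ j ∈ Finset.range i, F j ω := by
    funext ω
    have hp : par ω i < i := hlt ω i hi
    have h1 : treeDepth (par ω) i = treeDepth (par ω) (par ω i) + 1 := by
      rw [treeDepth]; simp [hp]
    simp only [hF, ite_mul, one_mul, zero_mul]
    rw [Finset.sum_ite_eq, if_pos (Finset.mem_range.mpr hp), h1]
    push_cast
    ring_nf
  have hterm : ∀ j ∈ Finset.range i, ∫ ω, F j ω ∂μ
      = (i:ℝ)⁻¹ * ((∫ ω, Real.exp (t * treeDepth (par ω) j) ∂μ) * Real.exp t) := by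
    intro j hj
    have hji : j < i := Finset.mem_range.mp hj
    set φ : ({ x // x ∈ ({i} : Finset ℕ) } → ℕ) → ℝ :=
      fun x => if x ⟨i, Finset.mem_singleton_self i⟩ = j then (1:ℝ) else 0 with hφ
    set ψ : ({ x // x ∈ Finset.range i } → ℕ) → ℝ := fun x =>
      Real.exp (t * ((treeDepth (fun m => if h : m ∈ Finset.range i then x ⟨m, h⟩ else 0) j : ℝ)
        + 1)) with hψ
    have hIndep2 : IndepFun (fun ω => (if par ω i = j then (1:ℝ) else 0))
        (fun ω => Real.exp (t * ((treeDepth (par ω) j : ℝ) + 1))) μ := by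
      have h2 := hIndep.comp (φ := φ) (ψ := ψ)
        (measurable_of_countable φ) (measurable_of_countable ψ)
      have e1 : (φ ∘ fun ω (m : { x // x ∈ ({i} : Finset ℕ) }) => par ω m)
          = fun ω => (if par ω i = j then (1:ℝ) else 0) := rfl
      have e2 : (ψ ∘ fun ω (m : { x // x ∈ Finset.range i }) => par ω m)
          = fun ω => Real.exp (t * ((treeDepth (par ω) j : ℝ) + 1)) := by
        funext ω
        simp only [Function.comp_apply, hψ]
        congr 2
        rw [treeDepth_congr (g := par ω) ?_]
        intro m hm
        rw [dif_pos (Finset.mem_range.mpr (lt_of_le_of_lt hm hji))]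
      rw [e1, e2] at h2
      exact h2
    have hint1 : Integrable (fun ω => (if par ω i = j then (1:ℝ) else 0)) μ :=
      integrable_of_bdd μ (Measurable.ite ((hmeas i) (measurableSet_singleton j))
        measurable_const measurable_const) 1 (by intro ω; split <;> simp)
    have hint2 : Integrable (fun ω => Real.exp (t * ((treeDepth (par ω) j : ℝ) + 1))) μ :=
      integrable_of_bdd μ (measurable_expD par hmeas t j) (Real.exp (t * ((j:ℝ)+1))) (Ebdd j)
    have hmul : ∫ ω, F j ω ∂μ
        = (∫ ω, (if par ω i = j then (1:ℝ) else 0) ∂μ)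
          * ∫ ω, Real.exp (t * ((treeDepth (par ω) j : ℝ) + 1)) ∂μ := by
      rw [hF]
      exact hIndep2.integral_fun_mul_eq_mul_integral hint1.aestronglyMeasurable hint2.aestronglyMeasurable
    have hind : ∫ ω, (if par ω i = j then (1:ℝ) else 0) ∂μ = (i:ℝ)⁻¹ := by
      have e3 : (fun ω => if par ω i = j then (1:ℝ) else 0)
          = Set.indicator ((fun ω => par ω i) ⁻¹' {j}) (1 : Ω → ℝ) := by
        funext ω
        by_cases h : par ω i = j
        · rw [if_pos h, Set.indicator_of_mem (by exact h)]; rfl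
        · rw [if_neg h, Set.indicator_of_notMem (by exact h)]
      have e4 : μ ((fun ω => par ω i) ⁻¹' {j}) = (i : ENNReal)⁻¹ := hunif i hi j hji
      rw [e3, integral_indicator_one ((hmeas i) (measurableSet_singleton j)), measureReal_def, e4]
      simp
    have hexp : ∫ ω, Real.exp (t * ((treeDepth (par ω) j : ℝ) + 1)) ∂μ
        = (∫ ω, Real.exp (t * treeDepth (par ω) j) ∂μ) * Real.exp t := by
      rw [← integral_mul_const]
      congr 1; funext ω
      rw [← Real.exp_add, mul_add, mul_one]
    rw [hmul, hind, hexp]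
  rw [key, integral_finset_sum _ (fun j _ => Fint j), Finset.sum_congr rfl hterm,
    ← Finset.mul_sum, ← Finset.sum_mul]
  ring
lemma mgf_zero : ∫ ω, Real.exp (t * treeDepth (par ω) 0) ∂μ = 1 := by
  have : ∀ ω : Ω, Real.exp (t * treeDepth (par ω) 0) = 1 := by
    intro ω
    rw [treeDepth]
    simp
  simp only [this]
  simp

lemma mgf_closed
    (hmeas : ∀ i, Measurable fun ω => par ω i)
    (hlt : ∀ ω, ∀ i : ℕ, 0 < i → par ω i < i)
    (hunif : ∀ i : ℕ, 0 < i → ∀ j < i, μ {ω | par ω i = j} = (i : ENNReal)⁻¹)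
    (hindep : iIndepFun (fun i ω => par ω i) μ)
    (t : ℝ) (ht : 0 ≤ t) (i : ℕ) :
    ∑ j ∈ Finset.range (i+1), ∫ ω, Real.exp (t * treeDepth (par ω) j) ∂μ
      = ∏ j ∈ Finset.Icc 1 i, (1 + Real.exp t / j) := by
  induction i with
  | zero => simp [mgf_zero μ par]
  | succ i ih =>
    rw [Finset.sum_range_succ, ih,
      mgf_rec μ par hmeas hlt hunif hindep t ht (i+1) (Nat.succ_pos i), ih,
      Finset.prod_Icc_succ_top (Nat.le_add_left 1 i)]
    ring

lemma mgf_le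
    (hmeas : ∀ i, Measurable fun ω => par ω i)
    (hlt : ∀ ω, ∀ i : ℕ, 0 < i → par ω i < i)
    (hunif : ∀ i : ℕ, 0 < i → ∀ j < i, μ {ω | par ω i = j} = (i : ENNReal)⁻¹)
    (hindep : iIndepFun (fun i ω => par ω i) μ)
    (t : ℝ) (ht : 0 ≤ t) (n i : ℕ) (hi : 0 < i) (hin : i ≤ n) :
    ∫ ω, Real.exp (t * treeDepth (par ω) i) ∂μ
      ≤ Real.exp t / i * Real.exp (Real.exp t * (1 + Real.log n)) := by
  rw [mgf_rec μ par hmeas hlt hunif hindep t ht i hi]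
  have h1 : ∑ j ∈ Finset.range i, ∫ ω, Real.exp (t * treeDepth (par ω) j) ∂μ
      = ∏ j ∈ Finset.Icc 1 (i-1), (1 + Real.exp t / j) := by
    have : i = (i - 1) + 1 := (Nat.succ_pred_eq_of_pos hi).symm
    rw [this] at *
    exact mgf_closed μ par hmeas hlt hunif hindep t ht (i-1)
  rw [h1]
  apply mul_le_mul_of_nonneg_left _ (by positivity)
  calc ∏ j ∈ Finset.Icc 1 (i-1), (1 + Real.exp t / j)
      ≤ ∏ j ∈ Finset.Icc 1 (i-1), Real.exp (Real.exp t / j) := by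
        apply Finset.prod_le_prod
        · intro j hj; positivity
        · intro j hj
          have := Real.add_one_le_exp (Real.exp t / j)
          linarith
    _ = Real.exp (∑ j ∈ Finset.Icc 1 (i-1), Real.exp t / j) := (Real.exp_sum _ _).symm
    _ ≤ Real.exp (Real.exp t * (1 + Real.log n)) := by
        apply Real.exp_le_exp.mpr
        have e1 : ∑ j ∈ Finset.Icc 1 (i-1), Real.exp t / j
            = Real.exp t * ∑ j ∈ Finset.Icc 1 (i-1), ((j:ℝ))⁻¹ := by
          rw [Finset.mul_sum]
          exact Finset.sum_congr rfl fun j _ => div_eq_mul_inv _ _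
        rw [e1]
        apply mul_le_mul_of_nonneg_left _ (Real.exp_pos t).le
        have e2 : ∑ j ∈ Finset.Icc 1 (i-1), ((j:ℝ))⁻¹ = ((harmonic (i-1) : ℚ) : ℝ) := by
          rw [harmonic_eq_sum_Icc]
          push_cast
          rfl
        rw [e2]
        calc ((harmonic (i-1) : ℚ) : ℝ) ≤ 1 + Real.log (i-1 : ℕ) := harmonic_le_one_add_log _
          _ ≤ 1 + Real.log n := by
            apply add_le_add le_rfl
            rcases Nat.eq_zero_or_pos (i-1) with h0 | h0
            · rw [h0]
              simpa using Real.log_natCast_nonneg n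
            · apply Real.log_le_log (by exact_mod_cast h0)
              exact_mod_cast Nat.le_trans (Nat.sub_le i 1) hin
lemma measurable_expD0 (hmeas : ∀ i, Measurable fun ω => par ω i) (t : ℝ) (j : ℕ) :
    Measurable fun ω => Real.exp (t * (treeDepth (par ω) j : ℝ)) :=
  Real.measurable_exp.comp (measurable_const.mul
    ((measurable_of_countable (Nat.cast : ℕ → ℝ)).comp (measurable_treeDepth par hmeas j)))

lemma main_bound
    (hmeas : ∀ i, Measurable fun ω => par ω i)
    (hlt : ∀ ω, ∀ i : ℕ, 0 < i → par ω i < i)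
    (hunif : ∀ i : ℕ, 0 < i → ∀ j < i, μ {ω | par ω i = j} = (i : ENNReal)⁻¹)
    (hindep : iIndepFun (fun i ω => par ω i) μ)
    (n : ℕ) (hn : 2 ≤ n) :
    ∫ ω, (((Finset.range (n + 1)).sup fun i => treeDepth (par ω) i : ℕ) : ℝ) ∂μ
      ≤ Real.exp 1 * Real.log n + (13 + 8 * Real.log (1 + Real.log n)) := by
  classical
  set H : Ω → ℕ := fun ω => (Finset.range (n + 1)).sup fun i => treeDepth (par ω) i with hH
  set L : ℝ := 1 + Real.log n with hLdef
  have hlogn : 0 ≤ Real.log n := Real.log_natCast_nonneg n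
  have hL1 : (1:ℝ) ≤ L := by rw [hLdef]; linarith
  have hLpos : (0:ℝ) < L := lt_of_lt_of_le one_pos hL1
  have hlogL : 0 ≤ Real.log L := Real.log_nonneg hL1
  have he1 : (2.7182818283:ℝ) < Real.exp 1 := Real.exp_one_gt_d9
  have he2 : Real.exp 1 < 2.7182818286 := Real.exp_one_lt_d9
  set δ : ℝ := (2 + 2*Real.log L) / (Real.exp 1 * L) with hδdef
  have hδpos : 0 < δ := by
    rw [hδdef]
    apply div_pos (by linarith) (by positivity)
  have hδeL : δ * (Real.exp 1 * L) = 2 + 2*Real.log L := by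
    rw [hδdef]
    exact div_mul_cancel₀ _ (by positivity)
  have hδ34 : δ ≤ 3/4 := by
    have h1 : 2 + 2*Real.log L ≤ 2*L := by
      have := Real.log_le_sub_one_of_pos hLpos; linarith
    have h2 : δ ≤ 2*L / (Real.exp 1 * L) := by
      rw [hδdef]
      exact div_le_div_of_nonneg_right h1 (by positivity)
    have h3 : 2*L / (Real.exp 1 * L) = 2 / Real.exp 1 := by
      field_simp
    rw [h3] at h2
    have h4 : 2 / Real.exp 1 ≤ 3/4 := by
      rw [div_le_div_iff₀ (by positivity) (by norm_num)]
      nlinarith [he1]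
    linarith
  set t : ℝ := 1 + δ with htdef
  have ht1 : 1 ≤ t := by rw [htdef]; linarith
  have ht0 : 0 ≤ t := by linarith
  have ht2 : t ≤ 2 := by rw [htdef]; linarith
  set K : ℕ := ⌈Real.exp t * L⌉₊ with hKdef
  set A : ℝ := Real.exp (Real.exp t * L) with hAdef
  have hApos : 0 < A := by rw [hAdef]; exact Real.exp_pos _
  have hKceil : Real.exp t * L ≤ (K:ℝ) := by rw [hKdef]; exact Nat.le_ceil _
  have hKceil2 : (K:ℝ) ≤ Real.exp t * L + 1 := by
    rw [hKdef]
    exact le_of_lt (Nat.ceil_lt_add_one (by positivity))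
  clear_value δ t K A
  set M : ℕ → ℝ := fun i => ∫ ω, Real.exp (t * treeDepth (par ω) i) ∂μ with hM
  have hDmeasSet : ∀ i m : ℕ, MeasurableSet {ω | m ≤ treeDepth (par ω) i} :=
    fun i m => (measurable_treeDepth par hmeas i) measurableSet_Ici
  have hchern : ∀ i m : ℕ, (μ {ω | m ≤ treeDepth (par ω) i}).toReal * Real.exp (t*m) ≤ M i := by
    intro i m
    have hsm : MeasurableSet {ω | m ≤ treeDepth (par ω) i} := hDmeasSet i m
    have h1 : ∫ ω, Set.indicator {ω | m ≤ treeDepth (par ω) i}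
        (fun _ => Real.exp (t*m)) ω ∂μ
        = (μ {ω | m ≤ treeDepth (par ω) i}).toReal * Real.exp (t*m) := by
      rw [integral_indicator_const _ hsm, smul_eq_mul, measureReal_def]
    rw [← h1, hM]
    apply integral_mono
    · exact (integrable_const _).indicator hsm
    · apply integrable_of_bdd μ (measurable_expD0 par hmeas t i) (Real.exp (t*i))
      intro ω
      rw [Real.norm_eq_abs, abs_of_pos (Real.exp_pos _)]
      apply Real.exp_le_exp.mpr
      apply mul_le_mul_of_nonneg_left _ ht0
      exact_mod_cast treeDepth_le (par ω) i
    · intro ω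
      by_cases hω : ω ∈ {ω | m ≤ treeDepth (par ω) i}
      · rw [Set.indicator_of_mem hω]
        apply Real.exp_le_exp.mpr
        apply mul_le_mul_of_nonneg_left _ ht0
        exact_mod_cast hω
      · rw [Set.indicator_of_notMem hω]
        positivity
  have hMle : ∀ i, 0 < i → i ≤ n → M i ≤ Real.exp t / i * A := by
    intro i hi hin
    rw [hM, hAdef]
    exact mgf_le μ par hmeas hlt hunif hindep t ht0 n i hi hin
  have hset : ∀ k : ℕ, {ω | k < H ω}
      = ⋃ i ∈ Finset.range (n+1), {ω | k+1 ≤ treeDepth (par ω) i} := by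
    intro k
    ext ω
    simp only [Set.mem_setOf_eq, Set.mem_iUnion, exists_prop, hH, Finset.lt_sup_iff]
    constructor
    · rintro ⟨i, hi, h⟩; exact ⟨i, hi, h⟩
    · rintro ⟨i, hi, h⟩; exact ⟨i, hi, h⟩
  have hAmeas : ∀ k : ℕ, MeasurableSet {ω | k < H ω} := by
    intro k
    rw [hset k]
    exact (Finset.range (n+1)).measurableSet_biUnion fun i _ => hDmeasSet i (k+1)
  set q : ℕ → ℝ := fun k => (μ {ω | k < H ω}).toReal with hq
  have hq1 : ∀ k, q k ≤ 1 := by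
    intro k
    rw [hq]
    have h1 : μ {ω | k < H ω} ≤ 1 := prob_le_one
    calc (μ {ω | k < H ω}).toReal ≤ (1 : ENNReal).toReal :=
        ENNReal.toReal_mono (by norm_num) h1
      _ = 1 := by simp
  have hq0 : ∀ k, 0 ≤ q k := fun k => ENNReal.toReal_nonneg
  have hharm : ∑ i ∈ Finset.range (n+1), ((i:ℝ))⁻¹ ≤ L := by
    rw [Finset.sum_range_succ']
    simp only [Nat.cast_zero, inv_zero, add_zero]
    have e2 : ∑ i ∈ Finset.range n, (((i+1 : ℕ)):ℝ)⁻¹ = ((harmonic n : ℚ) : ℝ) := by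
      rw [harmonic]
      push_cast
      rfl
    rw [e2, hLdef]
    exact harmonic_le_one_add_log n
  have hqB : ∀ k : ℕ, q k ≤ Real.exp t * L * A * Real.exp (-(t*((k:ℝ)+1))) := by
    intro k
    have hsub : μ {ω | k < H ω}
        ≤ ∑ i ∈ Finset.range (n+1), μ {ω | k+1 ≤ treeDepth (par ω) i} := by
      rw [hset k]
      exact measure_biUnion_finset_le _ _
    have h2 : q k ≤ ∑ i ∈ Finset.range (n+1), (μ {ω | k+1 ≤ treeDepth (par ω) i}).toReal := by
      rw [hq]
      calc (μ {ω | k < H ω}).toReal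
          ≤ (∑ i ∈ Finset.range (n+1), μ {ω | k+1 ≤ treeDepth (par ω) i}).toReal :=
            ENNReal.toReal_mono (ENNReal.sum_ne_top.mpr fun i _ => measure_ne_top μ _) hsub
        _ = _ := ENNReal.toReal_sum fun i _ => measure_ne_top μ _
    have h3 : ∀ i ∈ Finset.range (n+1), (μ {ω | k+1 ≤ treeDepth (par ω) i}).toReal
        ≤ ((i:ℝ))⁻¹ * (Real.exp t * (A * Real.exp (-(t*((k:ℝ)+1))))) := by
      intro i hi
      rcases Nat.eq_zero_or_pos i with rfl | hipos
      · have hempty : {ω | k+1 ≤ treeDepth (par ω) 0} = ∅ := by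
          ext ω
          simp [treeDepth]
        rw [hempty]
        simp
      · have hc := hchern i (k+1)
        have hMi := hMle i hipos (Nat.lt_succ_iff.mp (Finset.mem_range.mp hi))
        have hexpos : (0:ℝ) < Real.exp (t*((k:ℝ)+1)) := Real.exp_pos _
        have h4 : (μ {ω | k+1 ≤ treeDepth (par ω) i}).toReal
            ≤ (Real.exp t / i * A) * Real.exp (-(t*((k:ℝ)+1))) := by
          rw [Real.exp_neg, ← div_eq_mul_inv, le_div_iff₀ hexpos]
          calc (μ {ω | k+1 ≤ treeDepth (par ω) i}).toReal * Real.exp (t*((k:ℝ)+1))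
              ≤ M i := by
                have : ((k:ℝ)+1) = (((k+1 : ℕ)):ℝ) := by push_cast; ring
                rw [this]
                exact hc
            _ ≤ _ := hMi
        calc (μ {ω | k+1 ≤ treeDepth (par ω) i}).toReal
            ≤ (Real.exp t / i * A) * Real.exp (-(t*((k:ℝ)+1))) := h4
          _ = ((i:ℝ))⁻¹ * (Real.exp t * (A * Real.exp (-(t*((k:ℝ)+1))))) := by
              rw [div_eq_mul_inv]; ring
    calc q k ≤ ∑ i ∈ Finset.range (n+1), (μ {ω | k+1 ≤ treeDepth (par ω) i}).toReal := h2
      _ ≤ ∑ i ∈ Finset.range (n+1),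
            ((i:ℝ))⁻¹ * (Real.exp t * (A * Real.exp (-(t*((k:ℝ)+1))))) :=
          Finset.sum_le_sum h3
      _ = (∑ i ∈ Finset.range (n+1), ((i:ℝ))⁻¹)
            * (Real.exp t * (A * Real.exp (-(t*((k:ℝ)+1))))) := by
          rw [Finset.sum_mul]
      _ ≤ L * (Real.exp t * (A * Real.exp (-(t*((k:ℝ)+1))))) := by
          apply mul_le_mul_of_nonneg_right hharm
          positivity
      _ = Real.exp t * L * A * Real.exp (-(t*((k:ℝ)+1))) := by ring
  have hHle : ∀ ω, H ω ≤ n := fun ω => Finset.sup_le fun i hi =>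
    le_trans (treeDepth_le (par ω) i) (Nat.lt_succ_iff.mp (Finset.mem_range.mp hi))
  have hptw : ∀ ω, ((H ω : ℕ) : ℝ)
      = ∑ k ∈ Finset.range n, Set.indicator {ω' | k < H ω'} (fun _ => (1:ℝ)) ω := by
    intro ω
    have hid : ∀ k, Set.indicator {ω' | k < H ω'} (fun _ => (1:ℝ)) ω
        = if k < H ω then 1 else 0 := by
      intro k
      by_cases h : k < H ω
      · rw [Set.indicator_of_mem (by exact h), if_pos h]
      · rw [Set.indicator_of_notMem (by exact h), if_neg h]
    simp only [hid]
    rw [Finset.sum_boole]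
    congr 1
    have hfil : Finset.filter (fun k => k < H ω) (Finset.range n) = Finset.range (H ω) := by
      ext k
      simp only [Finset.mem_filter, Finset.mem_range]
      constructor
      · rintro ⟨_, h⟩; exact h
      · intro h; exact ⟨lt_of_lt_of_le h (hHle ω), h⟩
    rw [hfil, Finset.card_range]
  have hEq : ∫ ω, ((H ω : ℕ) : ℝ) ∂μ = ∑ k ∈ Finset.range n, q k := by
    rw [show (fun ω => ((H ω : ℕ):ℝ))
      = fun ω => ∑ k ∈ Finset.range n, Set.indicator {ω' | k < H ω'} (fun _ => (1:ℝ)) ω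
      from funext hptw]
    rw [integral_finset_sum _ (fun k _ => (integrable_const (1:ℝ)).indicator (hAmeas k))]
    refine Finset.sum_congr rfl fun k _ => ?_
    rw [hq]
    exact integral_indicator_one (hAmeas k)
  -- key exponent inequality
  have hKt : Real.exp t * L + 2 + 2*Real.log L ≤ t * K := by
    have h1 : Real.exp t * L ≤ (K:ℝ) := hKceil
    have h2 : t * (Real.exp t * L) ≤ t * K := mul_le_mul_of_nonneg_left h1 ht0
    have h3 : t * (Real.exp t * L) = Real.exp t * L + δ * (Real.exp t * L) := by
      rw [htdef]; ring
    have h4 : δ * (Real.exp 1 * L) ≤ δ * (Real.exp t * L) := by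
      apply mul_le_mul_of_nonneg_left _ hδpos.le
      exact mul_le_mul_of_nonneg_right (Real.exp_le_exp.mpr ht1) hLpos.le
    linarith [hδeL]
  have hc2 : Real.exp t * L * A * Real.exp (-(t*((K:ℝ)+1))) ≤ Real.exp (-1) / L := by
    have hform : Real.exp t * L * A * Real.exp (-(t*((K:ℝ)+1)))
        = L * Real.exp (t + Real.exp t * L + -(t*((K:ℝ)+1))) := by
      rw [hAdef, Real.exp_add, Real.exp_add]
      ring
    have hX : t + Real.exp t * L + -(t*((K:ℝ)+1)) ≤ -1 - 2*Real.log L := by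
      have h5 : t*((K:ℝ)+1) = t*K + t := by ring
      linarith [hKt]
    have hLe : Real.exp (Real.log L) = L := Real.exp_log hLpos
    calc Real.exp t * L * A * Real.exp (-(t*((K:ℝ)+1)))
        = L * Real.exp (t + Real.exp t * L + -(t*((K:ℝ)+1))) := hform
      _ ≤ L * Real.exp (-1 - 2*Real.log L) := by
          apply mul_le_mul_of_nonneg_left (Real.exp_le_exp.mpr hX) hLpos.le
      _ = Real.exp (-1) / L := by
          rw [show (-1 - 2*Real.log L : ℝ) = -1 + (-(Real.log L) + -(Real.log L)) by ring,
            Real.exp_add, Real.exp_add, Real.exp_neg, Real.exp_neg, hLe]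
          field_simp
  have hhalf : Real.exp (-1) ≤ 1/2 := by
    rw [Real.exp_neg]
    rw [inv_le_comm₀ (Real.exp_pos 1) (by norm_num : (0:ℝ) < 1/2)]
    norm_num
    linarith
  have hS1 : ∑ k ∈ (Finset.range n).filter (fun k => k < K), q k ≤ (K:ℝ) := by
    calc ∑ k ∈ (Finset.range n).filter (fun k => k < K), q k
        ≤ ∑ k ∈ (Finset.range n).filter (fun k => k < K), 1 :=
          Finset.sum_le_sum fun k _ => hq1 k
      _ = ((Finset.range n).filter (fun k => k < K)).card := by simp
      _ ≤ (K:ℝ) := by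
          have hsub2 : (Finset.range n).filter (fun k => k < K) ⊆ Finset.range K := by
            intro k hk
            exact Finset.mem_range.mpr (Finset.mem_filter.mp hk).2
          have := Finset.card_le_card hsub2
          rw [Finset.card_range] at this
          exact_mod_cast this
  have hS2 : ∑ k ∈ (Finset.range n).filter (fun k => ¬ k < K), q k ≤ 1 := by
    have hterm : ∀ k ∈ (Finset.range n).filter (fun k => ¬ k < K),
        q k ≤ Real.exp (-1) / L * (1/2:ℝ)^(k - K) := by
      intro k hk
      have hKk : K ≤ k := Nat.le_of_not_lt (Finset.mem_filter.mp hk).2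
      have h1 := hqB k
      have hdec : Real.exp (-(t*((k:ℝ)+1)))
          = Real.exp (-(t*((K:ℝ)+1))) * Real.exp (-t) ^ (k - K) := by
        rw [← Real.exp_nat_mul, ← Real.exp_add]
        congr 1
        have hcast : ((k - K : ℕ) : ℝ) = (k:ℝ) - K := Nat.cast_sub hKk
        rw [hcast]
        ring
      have h2 : Real.exp (-t) ^ (k-K) ≤ (1/2:ℝ)^(k-K) := by
        apply pow_le_pow_left₀ (Real.exp_pos _).le
        have h3 : Real.exp (-t) ≤ Real.exp (-1) := Real.exp_le_exp.mpr (by linarith)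
        linarith
      calc q k ≤ Real.exp t * L * A * Real.exp (-(t*((k:ℝ)+1))) := h1
        _ = (Real.exp t * L * A * Real.exp (-(t*((K:ℝ)+1)))) * Real.exp (-t) ^ (k-K) := by
            rw [hdec]; ring
        _ ≤ (Real.exp (-1) / L) * (1/2:ℝ)^(k-K) := by
            apply mul_le_mul hc2 h2 (by positivity) (by positivity)
    calc ∑ k ∈ (Finset.range n).filter (fun k => ¬ k < K), q k
        ≤ ∑ k ∈ (Finset.range n).filter (fun k => ¬ k < K),
            Real.exp (-1) / L * (1/2:ℝ)^(k - K) := Finset.sum_le_sum hterm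
      _ = Real.exp (-1) / L * ∑ k ∈ (Finset.range n).filter (fun k => ¬ k < K),
            (1/2:ℝ)^(k - K) := by rw [Finset.mul_sum]
      _ ≤ Real.exp (-1) / L * 2 := by
          apply mul_le_mul_of_nonneg_left _ (by positivity)
          have himg : ∑ k ∈ (Finset.range n).filter (fun k => ¬ k < K), (1/2:ℝ)^(k - K)
              = ∑ r ∈ ((Finset.range n).filter (fun k => ¬ k < K)).image (fun k => k - K),
                  (1/2:ℝ)^r := by
            rw [Finset.sum_image]
            intro x hx y hy hxy
            have hx' : K ≤ x := Nat.le_of_not_lt (Finset.mem_filter.mp hx).2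
            have hy' : K ≤ y := Nat.le_of_not_lt (Finset.mem_filter.mp hy).2
            have hxy' : x - K = y - K := hxy
            omega
          rw [himg]
          calc ∑ r ∈ ((Finset.range n).filter (fun k => ¬ k < K)).image (fun k => k - K),
                  (1/2:ℝ)^r
              ≤ ∑ r ∈ Finset.range n, (1/2:ℝ)^r := by
                apply Finset.sum_le_sum_of_subset_of_nonneg
                · intro r hr
                  obtain ⟨k, hk, rfl⟩ := Finset.mem_image.mp hr
                  have : k < n := Finset.mem_range.mp (Finset.mem_filter.mp hk).1
                  exact Finset.mem_range.mpr (by omega)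
                · intro r _ _
                  positivity
            _ ≤ 2 := sum_geometric_two_le n
      _ ≤ 1 := by
          have h6 : Real.exp (-1) / L ≤ 1/2 := by
            calc Real.exp (-1) / L ≤ Real.exp (-1) / 1 := by
                  apply div_le_div_of_nonneg_left (Real.exp_pos _).le one_pos hL1
              _ = Real.exp (-1) := div_one _
              _ ≤ 1/2 := hhalf
          linarith
  have hE2 : ∫ ω, ((H ω : ℕ) : ℝ) ∂μ ≤ (K:ℝ) + 1 := by
    rw [hEq, ← Finset.sum_filter_add_sum_filter_not (Finset.range n) (fun k => k < K) q]
    linarith [hS1, hS2]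
  have hKle : (K:ℝ) ≤ Real.exp t * L + 1 := hKceil2
  have hexpt : Real.exp t ≤ Real.exp 1 * (1 + 4*δ) := by
    have h1 : (1 - δ) * Real.exp δ ≤ 1 := by
      have h2 := Real.add_one_le_exp (-δ)
      have h3 : Real.exp (-δ) = (Real.exp δ)⁻¹ := Real.exp_neg δ
      have h4 : (1 - δ) ≤ (Real.exp δ)⁻¹ := by rw [← h3]; linarith
      calc (1-δ) * Real.exp δ ≤ (Real.exp δ)⁻¹ * Real.exp δ :=
          mul_le_mul_of_nonneg_right h4 (Real.exp_pos δ).le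
        _ = 1 := inv_mul_cancel₀ (ne_of_gt (Real.exp_pos δ))
    have hE3 : Real.exp δ ≤ Real.exp 1 := Real.exp_le_exp.mpr (by linarith)
    have h5 : Real.exp δ ≤ 1 + 4*δ := by nlinarith [Real.exp_pos δ]
    rw [htdef, Real.exp_add]
    exact mul_le_mul_of_nonneg_left h5 (Real.exp_pos 1).le
  have h6 : Real.exp t * L ≤ Real.exp 1 * L + 4 * (2 + 2*Real.log L) := by
    calc Real.exp t * L ≤ Real.exp 1 * (1 + 4*δ) * L :=
        mul_le_mul_of_nonneg_right hexpt hLpos.le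
      _ = Real.exp 1 * L + 4*(δ * (Real.exp 1 * L)) := by ring
      _ = Real.exp 1 * L + 4 * (2 + 2*Real.log L) := by rw [hδeL]
  have h7 : Real.exp 1 * L = Real.exp 1 + Real.exp 1 * Real.log n := by
    rw [hLdef]; ring
  calc ∫ ω, ((H ω : ℕ) : ℝ) ∂μ ≤ (K:ℝ) + 1 := hE2
    _ ≤ Real.exp 1 * Real.log n + (13 + 8 * Real.log L) := by
        linarith [hKle, h6, h7, he2, hlogL]

lemma tendsto_c :
    Tendsto (fun n : ℕ => (13 + 8*Real.log (1+Real.log n))/Real.log n) atTop (nhds 0) := by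
  have hinner : Tendsto (fun n : ℕ => Real.log n) atTop atTop :=
    Real.tendsto_log_atTop.comp tendsto_natCast_atTop_atTop
  have houter : Tendsto (fun x : ℝ => (13 + 8*Real.log (1+x))/x) atTop (nhds 0) := by
    have h1 : Tendsto (fun x : ℝ => 13/x) atTop (nhds 0) :=
      tendsto_const_nhds.div_atTop tendsto_id
    have h2 : Tendsto (fun x : ℝ => Real.log (1+x)/x) atTop (nhds 0) := by
      have h3 : Tendsto (fun x : ℝ => Real.log x / x) atTop (nhds 0) := by
        have := Real.tendsto_pow_log_div_mul_add_atTop 1 0 1 one_ne_zero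
        simpa using this
      have h4 : Tendsto (fun x : ℝ => Real.log (1+x) / (1+x)) atTop (nhds 0) :=
        h3.comp (tendsto_atTop_add_const_left atTop 1 tendsto_id)
      have h5 : Tendsto (fun x : ℝ => (1+x)/x) atTop (nhds 1) := by
        have h6 : Tendsto (fun x : ℝ => 1/x + 1) atTop (nhds (0+1)) :=
          (tendsto_const_nhds.div_atTop tendsto_id).add tendsto_const_nhds
        rw [zero_add] at h6
        apply h6.congr'
        filter_upwards [eventually_gt_atTop (0:ℝ)] with x hx
        field_simp
      have h7 := h4.mul h5
      rw [zero_mul] at h7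
      apply h7.congr'
      filter_upwards [eventually_gt_atTop (0:ℝ)] with x hx
      have h8 : (1:ℝ) + x ≠ 0 := by linarith
      field_simp
    have h9 := h1.add (h2.const_mul 8)
    simp only [mul_zero, add_zero] at h9
    apply h9.congr
    intro x
    rw [add_div, mul_div_assoc]
  exact houter.comp hinner

end AuxRRT

/-- In a random recursive tree on nodes `0,...,n` (each node `i ≥ 1` picks its parent
uniformly from `{0,...,i-1}`, independently), the expected height satisfies
`E[H_n] ≤ (e + o(1)) log n`. -/
theorem recHeight_expectation {Ω : Type*} [MeasurableSpace Ω] (μ : Measure Ω)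
    [IsProbabilityMeasure μ] (par : Ω → ℕ → ℕ)
    (hmeas : ∀ i, Measurable fun ω => par ω i)
    (hlt : ∀ ω, ∀ i : ℕ, 0 < i → par ω i < i)
    (hunif : ∀ i : ℕ, 0 < i → ∀ j < i, μ {ω | par ω i = j} = (i : ENNReal)⁻¹)
    (hindep : iIndepFun (fun i ω => par ω i) μ) :
    ∃ c : ℕ → ℝ, Tendsto c atTop (nhds 0) ∧
      ∀ n : ℕ, 2 ≤ n →
        ∫ ω, (((Finset.range (n + 1)).sup fun i => treeDepth (par ω) i : ℕ) : ℝ) ∂μ ≤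
          (Real.exp 1 + c n) * Real.log n := by
  refine ⟨fun n => (13 + 8*Real.log (1+Real.log n))/Real.log n, tendsto_c, ?_⟩
  intro n hn
  have hmain := main_bound μ par hmeas hlt hunif hindep n hn
  have hlog2 : 0 < Real.log n := by
    apply Real.log_pos
    exact_mod_cast (by omega : (1:ℕ) < n)
  have hrw : (Real.exp 1 + (13 + 8*Real.log (1+Real.log n))/Real.log n) * Real.log n
      = Real.exp 1 * Real.log n + (13 + 8*Real.log (1+Real.log n)) := by
    field_simp
  rw [hrw]
  exact hmain
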